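/- arXiv:math/0112225 — 2 statements merged into one kernel-verified Lean document; each statement's English description precedes it below -/
import Mathlib

section
/- Let μ and ν be probability measures on the same measurable space with μ absolutely continuous with respect to ν, and let H(μ|ν) = E_μ[log(dμ/dν)] be the relative entropy. Then for every event E with μ(E) > 0, log(ν(E)/μ(E)) ≥ -(H(μ|ν) + e⁻¹)/μ(E). -/
open MeasureTheory Real ENNReal

/-- `log y ≤ y / e` for `y > 0`. -/
lemma aux_log_le_div_e {y : ℝ} (hy : 0 < y) : Real.log y ≤ y / Real.exp 1 := by
  have h1 : Real.log (y / Real.exp 1) ≤ y / Real.exp 1 - 1 :=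
    Real.log_le_sub_one_of_pos (div_pos hy (Real.exp_pos 1))
  have h2 : Real.log (y / Real.exp 1) = Real.log y - 1 := by
    rw [Real.log_div (ne_of_gt hy) (ne_of_gt (Real.exp_pos 1)), Real.log_exp]
  linarith

/-- `t * log t ≥ -e⁻¹` for `t ≥ 0`. -/
lemma aux_mul_log_ge {t : ℝ} (ht : 0 ≤ t) : -Real.exp (-1) ≤ t * Real.log t := by
  rcases eq_or_lt_of_le ht with h | h
  · simp [← h]; positivity
  · have h1 : Real.log t⁻¹ ≤ t⁻¹ / Real.exp 1 := aux_log_le_div_e (inv_pos.mpr h)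
    have h2 : t * Real.log t⁻¹ ≤ t * (t⁻¹ / Real.exp 1) :=
      mul_le_mul_of_nonneg_left h1 ht
    have h3 : t * (t⁻¹ / Real.exp 1) = 1 / Real.exp 1 := by
      field_simp
    rw [Real.log_inv] at h2
    have : Real.exp (-1) = 1 / Real.exp 1 := by
      rw [Real.exp_neg, one_div]
    rw [this]
    nlinarith

/-- Entropy inequality: for probability measures `μ ≪ ν` with relative entropy
`H = E_μ[log dμ/dν]`, and any event `E` with `μ E > 0`,
`log (ν E / μ E) ≥ -(H + e⁻¹) / μ E`. -/
theorem stmt_0 {Ω : Type*} [MeasurableSpace Ω] (μ ν : Measure Ω)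
    [IsProbabilityMeasure μ] [IsProbabilityMeasure ν] (hac : μ ≪ ν)
    (hInt : Integrable (fun x => Real.log ((μ.rnDeriv ν) x).toReal) μ)
    (H : ℝ) (hH : H = ∫ x, Real.log ((μ.rnDeriv ν) x).toReal ∂μ)
    (E : Set Ω) (hE : MeasurableSet E) (hpos : 0 < (μ E).toReal) :
    Real.log ((ν E).toReal / (μ E).toReal) ≥ -(H + Real.exp (-1)) / (μ E).toReal := by
  set F : Ω → ENNReal := μ.rnDeriv ν with hF
  set f : Ω → ℝ := fun x => (F x).toReal with hfdef
  -- basic positivity facts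
  have hμE_lt_top : μ E < ∞ := measure_lt_top μ E
  have hμE_pos : 0 < μ E := by
    by_contra h
    push_neg at h
    have : μ E = 0 := le_antisymm h zero_le
    simp [this] at hpos
  have hνE_pos : 0 < ν E := by
    rcases eq_or_lt_of_le (zero_le : 0 ≤ ν E) with h | h
    · exact absurd (hac h.symm) (by simpa using hμE_pos.ne')
    · exact h
  set m : ℝ := (μ E).toReal with hm
  set n : ℝ := (ν E).toReal with hn
  have hn_pos : 0 < n := ENNReal.toReal_pos hνE_pos.ne' (measure_ne_top ν E)
  set c : ℝ := n / m with hc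
  have hc_pos : 0 < c := div_pos hn_pos hpos
  -- a.e. facts about the RN derivative
  have hF_pos : ∀ᵐ x ∂μ, 0 < F x := Measure.rnDeriv_pos hac
  have hF_lt_top : ∀ᵐ x ∂μ, F x < ∞ :=
    (Measure.rnDeriv_lt_top μ ν).filter_mono hac.ae_le
  have hf_pos : ∀ᵐ x ∂μ, 0 < f x := by
    filter_upwards [hF_pos, hF_lt_top] with x h1 h2
    exact ENNReal.toReal_pos h1.ne' h2.ne
  -- Step A1: the inverse of f is integrable on E and its integral is ≤ n
  have hFinv_meas : AEMeasurable (fun x => (F x)⁻¹) μ :=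
    (Measure.measurable_rnDeriv μ ν).inv.aemeasurable
  have hlint_le : ∫⁻ x in E, (F x)⁻¹ ∂μ ≤ ν E := by
    rw [← setLIntegral_rnDeriv_mul hac (f := fun x => (F x)⁻¹)
      (Measure.measurable_rnDeriv μ ν).inv.aemeasurable hE]
    calc ∫⁻ x in E, F x * (F x)⁻¹ ∂ν ≤ ∫⁻ _ in E, 1 ∂ν :=
          lintegral_mono fun x => ENNReal.mul_inv_le_one (F x)
      _ = ν E := by simp
  have hlint_ne_top : ∫⁻ x in E, (F x)⁻¹ ∂μ ≠ ∞ :=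
    (lt_of_le_of_lt hlint_le (measure_lt_top ν E)).ne
  have hInv_int : IntegrableOn (fun x => (f x)⁻¹) E μ := by
    have : IntegrableOn (fun x => ((F x)⁻¹).toReal) E μ :=
      integrable_toReal_of_lintegral_ne_top (hFinv_meas.restrict) hlint_ne_top
    simpa [hfdef, ENNReal.toReal_inv] using this
  have hI_eq : ∫ x in E, (f x)⁻¹ ∂μ = (∫⁻ x in E, (F x)⁻¹ ∂μ).toReal := by
    rw [← integral_toReal (hFinv_meas.restrict) ?_]
    · simp [hfdef, ENNReal.toReal_inv]
    · filter_upwards [ae_restrict_of_ae hF_pos] with x hx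
      exact ENNReal.inv_lt_top.mpr hx
  have hI_le : ∫ x in E, (f x)⁻¹ ∂μ ≤ n := by
    rw [hI_eq, hn]
    exact ENNReal.toReal_mono (measure_ne_top ν E) hlint_le
  have hI_nonneg : 0 ≤ ∫ x in E, (f x)⁻¹ ∂μ := by
    apply integral_nonneg
    intro x; positivity
  -- Step A2/A3: -∫_E log f ≤ m * log c
  have hlogInt : IntegrableOn (fun x => Real.log (f x)) E μ := hInt.integrableOn
  have hA : -∫ x in E, Real.log (f x) ∂μ ≤ m * Real.log c := by
    have hpt : ∀ᵐ x ∂(μ.restrict E),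
        -Real.log (f x) ≤ (f x)⁻¹ / c - 1 + Real.log c := by
      filter_upwards [ae_restrict_of_ae hf_pos] with x hx
      have h1 : Real.log ((f x)⁻¹ / c) ≤ (f x)⁻¹ / c - 1 :=
        Real.log_le_sub_one_of_pos (div_pos (inv_pos.mpr hx) hc_pos)
      have h2 : Real.log ((f x)⁻¹ / c) = -Real.log (f x) - Real.log c := by
        rw [Real.log_div (by positivity) hc_pos.ne', Real.log_inv]
      linarith
    have hRHSint : Integrable (fun x => (f x)⁻¹ / c - 1 + Real.log c)
        (μ.restrict E) := by
      exact ((hInv_int.div_const c).sub (integrable_const 1)).add (integrable_const _)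
    have hmono : ∫ x in E, -Real.log (f x) ∂μ ≤
        ∫ x in E, ((f x)⁻¹ / c - 1 + Real.log c) ∂μ :=
      integral_mono_ae hlogInt.neg hRHSint hpt
    have hcalc : ∫ x in E, ((f x)⁻¹ / c - 1 + Real.log c) ∂μ
        = (∫ x in E, (f x)⁻¹ ∂μ) / c - m + m * Real.log c := by
      have hfe : (fun x => (f x)⁻¹ / c - 1 + Real.log c)
          = fun x => (f x)⁻¹ / c + (Real.log c - 1) := by funext x; ring
      rw [hfe, integral_add (hInv_int.div_const c) (integrable_const _),
        integral_div, integral_const]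
      simp only [Measure.real, Measure.restrict_apply_univ, smul_eq_mul, ← hm]
      ring
    have hbound : (∫ x in E, (f x)⁻¹ ∂μ) / c ≤ m := by
      rw [div_le_iff₀ hc_pos, hc]
      calc ∫ x in E, (f x)⁻¹ ∂μ ≤ n := hI_le
        _ = m * (n / m) := by field_simp
    have : ∫ x in E, -Real.log (f x) ∂μ = -∫ x in E, Real.log (f x) ∂μ :=
      integral_neg _
    linarith [hmono, hcalc ▸ hmono]
  -- Step B: ∫_{Eᶜ} log f ≥ -e⁻¹
  have hB : -Real.exp (-1) ≤ ∫ x in Eᶜ, Real.log (f x) ∂μ := by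
    have hchg : ∫ x in Eᶜ, Real.log (f x) ∂μ
        = ∫ x in Eᶜ, f x • Real.log (f x) ∂ν :=
      (setIntegral_rnDeriv_smul hac hE.compl).symm
    have hIntν : Integrable (fun x => f x • Real.log (f x)) ν :=
      (integrable_rnDeriv_smul_iff hac).mpr hInt
    have hge : -Real.exp (-1) * (ν Eᶜ).toReal ≤ ∫ x in Eᶜ, f x • Real.log (f x) ∂ν := by
      apply setIntegral_ge_of_const_le_real hE.compl (measure_ne_top ν Eᶜ)
      · intro x _
        simpa [smul_eq_mul] using aux_mul_log_ge (ENNReal.toReal_nonneg : (0:ℝ) ≤ f x)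
      · exact hIntν.integrableOn
    have hle1 : (ν Eᶜ).toReal ≤ 1 := by
      have : ν Eᶜ ≤ 1 := (measure_mono (Set.subset_univ _)).trans_eq measure_univ
      simpa using ENNReal.toReal_mono (by norm_num) this
    have : -Real.exp (-1) ≤ -Real.exp (-1) * (ν Eᶜ).toReal := by
      nlinarith [Real.exp_pos (-1 : ℝ), ENNReal.toReal_nonneg (a := ν Eᶜ)]
    rw [hchg]
    linarith
  -- Step C: combine
  have hsplit : ∫ x in E, Real.log (f x) ∂μ + ∫ x in Eᶜ, Real.log (f x) ∂μ = H := by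
    rw [hH]
    exact integral_add_compl hE hInt
  have hkey : -(H + Real.exp (-1)) ≤ m * Real.log c := by
    have h1 : ∫ x in E, Real.log (f x) ∂μ ≤ H + Real.exp (-1) := by linarith
    linarith
  rw [ge_iff_le, div_le_iff₀ hpos] at *
  calc -(H + Real.exp (-1)) ≤ m * Real.log c := hkey
    _ = Real.log (n / m) * m := by rw [mul_comm]
end

section
/- Let Z be a centered Gaussian random variable with variance G > 0 and σ an independent real random variable with lim_{r→∞} r⁻² log P(σ > r) = -1/(2Q) for some Q > 0. Then for any α ∈ (0, 4(G+Q)) and any ε > 0, for all sufficiently large N, P(Z ≤ -(G/(G+Q))√(α log N)) · P(σ ≥ (Q/(G+Q))√(α log N)) ≥ N^{-(α+ε)/(2(G+Q))}. -/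
open MeasureTheory ProbabilityTheory Real Filter

lemma gauss_lb (G : NNReal) (hG : 0 < G) (s : ℝ) (hs : 0 ≤ s) :
    ENNReal.ofReal ((Real.sqrt (2 * π * G))⁻¹ * Real.exp (-(s+1)^2 / (2*G))) ≤
      gaussianReal 0 G (Set.Iic (-s)) := by
  rw [gaussianReal_apply_eq_integral 0 hG.ne' _]
  apply ENNReal.ofReal_le_ofReal
  have hGpos : (0:ℝ) < G := hG
  have hInt : IntegrableOn (gaussianPDFReal 0 G) (Set.Iic (-s)) :=
    (integrable_gaussianPDFReal 0 G).integrableOn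
  calc (Real.sqrt (2 * π * G))⁻¹ * Real.exp (-(s+1)^2 / (2*G))
      = ∫ x in Set.Icc (-s-1) (-s), (Real.sqrt (2 * π * G))⁻¹ * Real.exp (-(s+1)^2 / (2*G)) := by
        rw [setIntegral_const]
        rw [Real.volume_real_Icc]
        norm_num
    _ ≤ ∫ x in Set.Icc (-s-1) (-s), gaussianPDFReal 0 G x := by
        apply setIntegral_mono_on
        · exact integrableOn_const (by rw [Real.volume_Icc]; exact ENNReal.ofReal_ne_top)
        · exact (integrable_gaussianPDFReal 0 G).integrableOn
        · exact measurableSet_Icc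
        · intro x hx
          rw [gaussianPDFReal]
          apply mul_le_mul_of_nonneg_left _ (by positivity)
          apply Real.exp_le_exp.2
          rw [sub_zero, neg_div, neg_div, neg_le_neg_iff]
          have h1 : -(s+1) ≤ x := by linarith [hx.1]
          have h2 : x ≤ s+1 := by linarith [hx.2]
          have hx2 : x^2 ≤ (s+1)^2 := sq_le_sq' h1 h2
          gcongr
    _ ≤ ∫ x in Set.Iic (-s), gaussianPDFReal 0 G x := by
        apply setIntegral_mono_set hInt
        · exact ae_of_all _ (gaussianPDFReal_nonneg 0 G)
        · exact HasSubset.Subset.eventuallyLE Set.Icc_subset_Iic_self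

/-- For `Z ~ N(0,G)` and an independent `σ` with almost-Gaussian upward tail of
parameter `Q`, for any `α ∈ (0, 4(G+Q))` and `ε > 0`, eventually in `N`,
`P(Z ≤ -(G/(G+Q))√(α log N)) · P(σ ≥ (Q/(G+Q))√(α log N)) ≥ N^{-(α+ε)/(2(G+Q))}`. -/
theorem stmt_7 {Ω : Type*} [MeasurableSpace Ω] (P : Measure Ω) [IsProbabilityMeasure P]
    (G : NNReal) (hG : 0 < G) (Z : Ω → ℝ) (hZmeas : Measurable Z)
    (hZ : Measure.map Z P = gaussianReal 0 G)
    (σ : Ω → ℝ) (hσmeas : Measurable σ)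
    (hind : IndepFun Z σ P)
    (Q : ℝ) (hQ : 0 < Q)
    (htail : Tendsto (fun r : ℝ => Real.log (P {ω | r < σ ω}).toReal / r ^ 2)
      atTop (nhds (-1 / (2 * Q)))) :
    ∀ α : ℝ, 0 < α → α < 4 * ((G : ℝ) + Q) → ∀ ε : ℝ, 0 < ε →
      ∀ᶠ N : ℕ in atTop,
        (N : ℝ) ^ (-(α + ε) / (2 * ((G : ℝ) + Q))) ≤
          (P {ω | Z ω ≤ -(((G : ℝ) / ((G : ℝ) + Q)) * Real.sqrt (α * Real.log N))}).toReal *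
          (P {ω | ((Q / ((G : ℝ) + Q)) * Real.sqrt (α * Real.log N)) ≤ σ ω}).toReal := by
  intro α hα0 _hα4 ε hε
  have hGpos : (0:ℝ) < G := hG
  set S : ℝ := (G : ℝ) + Q with hS_def
  have hS : 0 < S := by positivity
  set δ : ℝ := ε * S / (8 * Q^2 * α) with hδ_def
  have hδ : 0 < δ := by positivity
  set c₀ : ℝ := (Real.sqrt (2 * π * G))⁻¹ with hc₀_def
  have hc₀ : 0 < c₀ := by positivity
  -- sigma tail lower bound, eventually
  have hσev : ∀ᶠ r : ℝ in atTop,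
      Real.exp ((-1/(2*Q) - δ) * r^2) ≤ (P {ω | r < σ ω}).toReal := by
    have h1 : ∀ᶠ r : ℝ in atTop,
        Real.log (P {ω | r < σ ω}).toReal / r^2 < -1/(4*Q) := by
      apply htail.eventually_lt_const
      rw [div_lt_div_iff₀ (by positivity) (by positivity)]
      nlinarith
    have h2 : ∀ᶠ r : ℝ in atTop,
        -1/(2*Q) - δ < Real.log (P {ω | r < σ ω}).toReal / r^2 :=
      htail.eventually_const_lt (by linarith)
    filter_upwards [h1, h2, eventually_ge_atTop 1] with r hr1 hr2 hr3
    have hr2pos : (0:ℝ) < r^2 := by positivity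
    set p := (P {ω | r < σ ω}).toReal with hp_def
    have hlogneg : Real.log p < 0 := by
      have h := (div_lt_iff₀ hr2pos).mp hr1
      have hneg : (0:ℝ) < 1/(4*Q) * r^2 := by positivity
      have h' : -1/(4*Q) * r^2 = -(1/(4*Q) * r^2) := by ring
      linarith
    have hppos : 0 < p := by
      rcases (ENNReal.toReal_nonneg (a := P {ω | r < σ ω})).lt_or_eq with h | h
      · exact h
      · rw [hp_def.trans h.symm, Real.log_zero] at hlogneg; linarith
    have hlb : (-1/(2*Q) - δ) * r^2 ≤ Real.log p :=
      le_of_lt ((lt_div_iff₀ hr2pos).mp hr2)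
    calc Real.exp ((-1/(2*Q) - δ) * r^2) ≤ Real.exp (Real.log p) := Real.exp_le_exp.2 hlb
      _ = p := Real.exp_log hppos
  -- Gaussian lower bound, for all s ≥ 0
  have hgauss : ∀ s : ℝ, 0 ≤ s →
      c₀ * Real.exp (-(s+1)^2 / (2*G)) ≤ (P {ω | Z ω ≤ -s}).toReal := by
    intro s hs
    have hmap : P {ω | Z ω ≤ -s} = gaussianReal 0 G (Set.Iic (-s)) := by
      rw [← hZ, Measure.map_apply hZmeas measurableSet_Iic]
      rfl
    have h := gauss_lb G hG s hs
    rw [← hmap] at h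
    have h2 := ENNReal.toReal_mono (measure_ne_top P _) h
    rwa [ENNReal.toReal_ofReal (by positivity)] at h2
  -- sqrt tendsto
  have hsqrt : Tendsto Real.sqrt atTop atTop := by
    apply tendsto_atTop_atTop.2
    intro b
    refine ⟨b^2, fun x hx => ?_⟩
    calc b ≤ |b| := le_abs_self b
      _ = Real.sqrt (b^2) := (Real.sqrt_sq_eq_abs b).symm
      _ ≤ Real.sqrt x := Real.sqrt_le_sqrt hx
  have hsq : Tendsto (fun L : ℝ => Real.sqrt (α * L)) atTop atTop :=
    hsqrt.comp (tendsto_id.const_mul_atTop hα0)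
  -- algebraic identity
  have halg : ∀ L : ℝ, 0 ≤ L →
      (Real.log c₀ + (-((G:ℝ)/S * Real.sqrt (α*L) + 1)^2 / (2*G))
        + ((-1/(2*Q) - δ) * ((Q/S) * Real.sqrt (α*L))^2))
        - (-(α+ε) / (2*S) * L)
      = (3*ε/(8*α*S)) * (Real.sqrt (α*L))^2 - Real.sqrt (α*L)/S
          + (Real.log c₀ - 1/(2*(G:ℝ))) := by
    intro L hL
    have hu : (Real.sqrt (α*L))^2 = α*L := Real.sq_sqrt (by positivity)
    set u := Real.sqrt (α*L) with hu_def
    have hL' : L = u^2 / α := by rw [hu]; field_simp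
    rw [hL', hδ_def, hS_def]
    field_simp
    ring
  -- the key eventual inequality on L
  have hkey : ∀ᶠ L : ℝ in atTop,
      -(α+ε) / (2*S) * L ≤
        Real.log c₀ + (-((G:ℝ)/S * Real.sqrt (α*L) + 1)^2 / (2*G))
          + ((-1/(2*Q) - δ) * ((Q/S) * Real.sqrt (α*L))^2) := by
    have hc1 : (0:ℝ) < 3*ε/(8*α*S) := by positivity
    have hinner : Tendsto (fun u : ℝ => (3*ε/(8*α*S)) * u - 1/S) atTop atTop :=
      tendsto_atTop_add_const_right _ (-(1/S))
        (tendsto_id.const_mul_atTop hc1) |>.congr (fun u => by simp only [id_eq]; ring)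
    have hmul : Tendsto (fun u : ℝ => u * ((3*ε/(8*α*S)) * u - 1/S)) atTop atTop :=
      tendsto_id.atTop_mul_atTop₀ hinner
    have hg : Tendsto (fun u : ℝ => (3*ε/(8*α*S)) * u^2 - u/S
        + (Real.log c₀ - 1/(2*(G:ℝ)))) atTop atTop :=
      (tendsto_atTop_add_const_right _ (Real.log c₀ - 1/(2*(G:ℝ))) hmul).congr
        (fun u => by ring)
    have hcomp := hg.comp hsq
    filter_upwards [hcomp.eventually_ge_atTop 0, eventually_ge_atTop 0] with L h0L hL0
    have heq := halg L hL0
    simp only [Function.comp] at h0L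
    linarith [heq ▸ h0L]
  -- tendsto of the sigma argument
  have hlogN : Tendsto (fun N : ℕ => Real.log N) atTop atTop :=
    Real.tendsto_log_atTop.comp tendsto_natCast_atTop_atTop
  have hrN : Tendsto (fun N : ℕ => (Q/S) * Real.sqrt (α * Real.log N)) atTop atTop :=
    (tendsto_id.const_mul_atTop (by positivity)).comp (hsq.comp hlogN)
  filter_upwards [hlogN.eventually hkey, hlogN.eventually_ge_atTop 0,
    hrN.eventually hσev, eventually_ge_atTop 1] with N hk hL0 hσN hN1
  have hNpos : (0:ℝ) < N := by exact_mod_cast Nat.lt_of_lt_of_le Nat.zero_lt_one hN1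
  set L : ℝ := Real.log N with hL_def
  set u : ℝ := Real.sqrt (α * L) with hu_def
  have hu0 : 0 ≤ u := Real.sqrt_nonneg _
  have hp1 : c₀ * Real.exp (-((G:ℝ)/S * u + 1)^2 / (2*G)) ≤
      (P {ω | Z ω ≤ -((G:ℝ)/S * u)}).toReal :=
    hgauss ((G:ℝ)/S * u) (by positivity)
  have hsub : {ω | (Q/S) * u < σ ω} ⊆ {ω | (Q/S) * u ≤ σ ω} :=
    Set.setOf_subset_setOf.mpr (fun ω h => le_of_lt h)
  have hp2 : Real.exp ((-1/(2*Q) - δ) * ((Q/S) * u)^2) ≤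
      (P {ω | (Q/S) * u ≤ σ ω}).toReal :=
    le_trans hσN (ENNReal.toReal_mono (measure_ne_top P _) (measure_mono hsub))
  rw [Real.rpow_def_of_pos hNpos]
  calc Real.exp (Real.log N * (-(α+ε) / (2*S)))
      = Real.exp (-(α+ε) / (2*S) * L) := by rw [mul_comm]
    _ ≤ Real.exp (Real.log c₀ + (-((G:ℝ)/S * u + 1)^2 / (2*G))
          + ((-1/(2*Q) - δ) * ((Q/S) * u)^2)) := Real.exp_le_exp.2 hk
    _ = (c₀ * Real.exp (-((G:ℝ)/S * u + 1)^2 / (2*G)))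
          * Real.exp ((-1/(2*Q) - δ) * ((Q/S) * u)^2) := by
        rw [Real.exp_add, Real.exp_add, Real.exp_log hc₀]
    _ ≤ _ := mul_le_mul hp1 hp2 (Real.exp_nonneg _) ENNReal.toReal_nonneg
end
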